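/- arXiv:1808.02442 — 3 statements merged into one kernel-verified Lean document; each statement's English description precedes it below -/
import Mathlib

section
/- If R, S ⊆ ω, 0 < r < 1, ε > 0 and m < n are natural numbers such that |R ∩ m|/m ∈ (r − ε, r + ε) and for all ℓ with m ≤ ℓ ≤ n we have |S ∩ ℓ|/ℓ ∈ (r − ε, r + ε), then for all ℓ with m ≤ ℓ ≤ n we have |(R ∩ m) ∪ (S ∩ [m, ℓ))|/ℓ ∈ (r − 3ε, r + 3ε). -/
theorem stmt1 (R S : Set ℕ) (r ε : ℝ) (hr0 : 0 < r) (hr1 : r < 1) (hε : 0 < ε)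
    (m n : ℕ) (hm : 0 < m) (hmn : m < n)
    (hR : (Nat.card {x | x ∈ R ∧ x < m} : ℝ) / m ∈ Set.Ioo (r - ε) (r + ε))
    (hS : ∀ ℓ, m ≤ ℓ → ℓ ≤ n →
      (Nat.card {x | x ∈ S ∧ x < ℓ} : ℝ) / ℓ ∈ Set.Ioo (r - ε) (r + ε)) :
    ∀ ℓ, m ≤ ℓ → ℓ ≤ n →
      (Nat.card {x | (x ∈ R ∧ x < m) ∨ (x ∈ S ∧ m ≤ x ∧ x < ℓ)} : ℝ) / ℓ ∈
        Set.Ioo (r - 3*ε) (r + 3*ε) := by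
  intro ℓ hmℓ hℓn
  have hfin : ∀ (T : Set ℕ) (k : ℕ), {x | x ∈ T ∧ x < k}.Finite := fun T k =>
    (Set.finite_Iio k).subset (fun x hx => hx.2)
  have hfinC : {x | x ∈ S ∧ m ≤ x ∧ x < ℓ}.Finite :=
    (Set.finite_Iio ℓ).subset (fun x hx => hx.2.2)
  -- split S ∩ ℓ
  have hBsplit : {x | x ∈ S ∧ x < ℓ} = {x | x ∈ S ∧ x < m} ∪ {x | x ∈ S ∧ m ≤ x ∧ x < ℓ} := by
    ext x
    by_cases hs : x ∈ S <;> simp only [Set.mem_setOf_eq, Set.mem_union, hs, true_and, false_and, false_or, or_false] <;> omega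
  have hBcard : ({x | x ∈ S ∧ x < ℓ}).ncard
      = ({x | x ∈ S ∧ x < m}).ncard + ({x | x ∈ S ∧ m ≤ x ∧ x < ℓ}).ncard := by
    rw [hBsplit, Set.ncard_union_eq ?_ (hfin S m) hfinC]
    rw [Set.disjoint_left]
    intro x hx hx'
    exact absurd hx'.2.1 (not_le.mpr hx.2)
  have hTsplit : {x | (x ∈ R ∧ x < m) ∨ (x ∈ S ∧ m ≤ x ∧ x < ℓ)}
      = {x | x ∈ R ∧ x < m} ∪ {x | x ∈ S ∧ m ≤ x ∧ x < ℓ} := by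
    ext x; simp only [Set.mem_setOf_eq, Set.mem_union]
  have hTcard : ({x | (x ∈ R ∧ x < m) ∨ (x ∈ S ∧ m ≤ x ∧ x < ℓ)}).ncard
      = ({x | x ∈ R ∧ x < m}).ncard + ({x | x ∈ S ∧ m ≤ x ∧ x < ℓ}).ncard := by
    rw [hTsplit, Set.ncard_union_eq ?_ (hfin R m) hfinC]
    rw [Set.disjoint_left]
    intro x hx hx'
    exact absurd hx'.2.1 (not_le.mpr hx.2)
  have hSm := hS m le_rfl (le_of_lt hmn)
  have hSℓ := hS ℓ hmℓ hℓn
  rw [Nat.card_coe_set_eq] at hR hSm hSℓ ⊢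
  set a := ({x | x ∈ R ∧ x < m}).ncard with ha
  set bm := ({x | x ∈ S ∧ x < m}).ncard with hbm
  set bℓ := ({x | x ∈ S ∧ x < ℓ}).ncard with hbℓ
  set c := ({x | x ∈ S ∧ m ≤ x ∧ x < ℓ}).ncard with hc
  rw [hTcard]
  have hm0 : (0:ℝ) < m := by exact_mod_cast hm
  have hℓ0 : (0:ℝ) < ℓ := by exact_mod_cast lt_of_lt_of_le hm hmℓ
  have hmℓ' : (m:ℝ) ≤ ℓ := by exact_mod_cast hmℓ
  obtain ⟨hR1, hR2⟩ := hR
  obtain ⟨hSm1, hSm2⟩ := hSm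
  obtain ⟨hSℓ1, hSℓ2⟩ := hSℓ
  rw [div_lt_iff₀ hm0] at hR2 hSm2
  rw [lt_div_iff₀ hm0] at hR1 hSm1
  rw [div_lt_iff₀ hℓ0] at hSℓ2
  rw [lt_div_iff₀ hℓ0] at hSℓ1
  have hb : (bℓ:ℝ) = bm + c := by exact_mod_cast congrArg Nat.cast hBcard
  constructor
  · rw [lt_div_iff₀ hℓ0]
    push_cast
    nlinarith [hε, hm0, hℓ0]
  · rw [div_lt_iff₀ hℓ0]
    push_cast
    nlinarith [hε, hm0, hℓ0]
end

section
/- For every chopped real (x, Π), the set Match(x, Π) of reals matching it is comeagre in 2^ω. -/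
open Filter

theorem stmt12 (x : ℕ → Bool) (e : ℕ → ℕ) (he : StrictMono e) (he0 : e 0 = 0) :
    {y : ℕ → Bool | ∃ᶠ n in atTop, ∀ i ∈ Set.Ico (e n) (e (n+1)), y i = x i} ∈
      residual (ℕ → Bool) := by
  have hset : {y : ℕ → Bool | ∃ᶠ n in atTop, ∀ i ∈ Set.Ico (e n) (e (n+1)), y i = x i} =
      ⋂ N : ℕ, ⋃ n : ℕ, ⋃ _ : N ≤ n,
        {y : ℕ → Bool | ∀ i ∈ Set.Ico (e n) (e (n+1)), y i = x i} := by
    ext y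
    simp only [Set.mem_setOf_eq, frequently_atTop, Set.mem_iInter, Set.mem_iUnion,
      Set.mem_setOf_eq, exists_prop]
  rw [hset]
  refine countable_iInter_mem.2 fun N => ?_
  refine residual_of_dense_open ?_ ?_
  · refine isOpen_iUnion fun n => isOpen_iUnion fun _ => ?_
    have : {y : ℕ → Bool | ∀ i ∈ Set.Ico (e n) (e (n+1)), y i = x i} =
        ⋂ i ∈ Set.Ico (e n) (e (n+1)), {y : ℕ → Bool | y i = x i} := by
      ext y; simp
    rw [this]
    refine (Set.finite_Ico _ _).isOpen_biInter fun i _ => ?_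
    have : {y : ℕ → Bool | y i = x i} = (fun y : ℕ → Bool => y i) ⁻¹' {x i} := rfl
    rw [this]
    exact (continuous_apply i).isOpen_preimage _ (isOpen_discrete _)
  · rw [dense_iff_inter_open]
    rintro U hU ⟨y, hy⟩
    have hUy : U ∈ nhds y := hU.mem_nhds hy
    rw [nhds_pi, Filter.mem_pi] at hUy
    obtain ⟨I, hIfin, t, ht, hsub⟩ := hUy
    obtain ⟨F, hF⟩ := hIfin.exists_finset_coe
    set m : ℕ := max N ((F.sup id) + 1) with hm
    refine ⟨fun i => if i < e m then y i else x i, ?_, ?_⟩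
    · apply hsub
      intro i hi
      have hiF : i ∈ F := by rw [← hF] at hi; exact_mod_cast hi
      have : i < e m := lt_of_le_of_lt (Finset.le_sup (f := id) hiF)
        (lt_of_lt_of_le (Nat.lt_succ_self _)
          (le_trans (le_max_right _ _) (he.le_apply)))
      simp only [this, if_pos]
      have := ht i
      rwa [nhds_discrete, mem_pure] at this
    · refine Set.mem_iUnion.2 ⟨m, Set.mem_iUnion.2 ⟨le_max_left _ _, ?_⟩⟩
      intro i hi
      have : ¬ i < e m := not_lt.2 hi.1
      simp [this]
end

section
/- A statistically splitting element splits: if S is moderate (0 < lower density of S and upper density of S < 1) and lim_{n→∞} d_n(S ∩ X)/(d_n(S)·d_n(X)) = 1 for an infinite X ⊆ ω, then both S ∩ X and X \ S are infinite. -/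
open Filter Topology

private lemma ratio_rw (a b x n : ℝ) (hn : n ≠ 0) :
    (a / n) / ((b / n) * (x / n)) = a * n / (b * x) := by
  rcases eq_or_ne b 0 with hb | hb
  · simp [hb]
  rcases eq_or_ne x 0 with hx | hx
  · simp [hx]
  field_simp

private lemma card_tendsto_atTop {X : Set ℕ} (hX : X.Infinite) :
    Tendsto (fun n => ((X ∩ Set.Iio n).ncard : ℝ)) atTop atTop := by
  have hmono : Monotone (fun n => (X ∩ Set.Iio n).ncard) := by
    intro m n hmn
    exact Set.ncard_le_ncard (Set.inter_subset_inter_right X (Set.Iio_subset_Iio hmn))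
      ((Set.finite_Iio n).inter_of_right X)
  have hunb : ∀ m : ℕ, ∃ n, m ≤ (X ∩ Set.Iio n).ncard := by
    intro m
    obtain ⟨t, htX, htfin, htcard⟩ := hX.exists_subset_ncard_eq m
    obtain ⟨N, hN⟩ := htfin.bddAbove
    refine ⟨N + 1, ?_⟩
    rw [← htcard]
    refine Set.ncard_le_ncard (fun k hk => ⟨htX hk, ?_⟩) ((Set.finite_Iio _).inter_of_right X)
    exact Nat.lt_succ_of_le (hN hk)
  have : Tendsto (fun n => (X ∩ Set.Iio n).ncard) atTop atTop := by
    apply tendsto_atTop_atTop_of_monotone hmono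
    intro m; obtain ⟨n, hn⟩ := hunb m; exact ⟨n, hn⟩
  exact tendsto_natCast_atTop_atTop.comp this

theorem stmt13 (S X : Set ℕ) (hX : X.Infinite)
    (hmod₁ : 0 < atTop.liminf (fun n => (Nat.card {k | k ∈ S ∧ k < n} : ℝ) / n))
    (hmod₂ : atTop.limsup (fun n => (Nat.card {k | k ∈ S ∧ k < n} : ℝ) / n) < 1)
    (h : Tendsto (fun n =>
      ((Nat.card {k | k ∈ S ∩ X ∧ k < n} : ℝ) / n) /
        (((Nat.card {k | k ∈ S ∧ k < n} : ℝ) / n) *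
          ((Nat.card {k | k ∈ X ∧ k < n} : ℝ) / n))) atTop (𝓝 1)) :
    (S ∩ X).Infinite ∧ (X \ S).Infinite := by
  have hrw : ∀ (A : Set ℕ) (n : ℕ),
      (Nat.card {k | k ∈ A ∧ k < n} : ℝ) = ((A ∩ Set.Iio n).ncard : ℝ) := by
    intro A n
    have hset : {k | k ∈ A ∧ k < n} = A ∩ Set.Iio n := by
      ext k; simp [Set.mem_Iio]
    rw [Nat.card_coe_set_eq, hset]
  simp only [hrw] at hmod₁ hmod₂ h
  -- notation
  set a : ℕ → ℝ := fun n => (((S ∩ X) ∩ Set.Iio n).ncard : ℝ) with ha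
  set b : ℕ → ℝ := fun n => ((S ∩ Set.Iio n).ncard : ℝ) with hb
  set x : ℕ → ℝ := fun n => ((X ∩ Set.Iio n).ncard : ℝ) with hxdef
  have hmod₁' : 0 < atTop.liminf (fun n : ℕ => b n / n) := hmod₁
  have hmod₂' : atTop.limsup (fun n : ℕ => b n / n) < 1 := hmod₂
  have h' : Tendsto (fun n : ℕ => (a n / n) / ((b n / n) * (x n / n))) atTop (𝓝 1) := h
  clear hmod₁ hmod₂ h
  have hfin : ∀ (A : Set ℕ) (n : ℕ), (A ∩ Set.Iio n).Finite :=
    fun A n => (Set.finite_Iio n).inter_of_right A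
  have hb_le : ∀ n : ℕ, b n ≤ n := by
    intro n
    have h1 : (S ∩ Set.Iio n).ncard ≤ (Set.Iio n).ncard :=
      Set.ncard_le_ncard Set.inter_subset_right (Set.finite_Iio n)
    have hIio : (Set.Iio n).ncard = n := by
      rw [← Finset.coe_range, Set.ncard_coe_finset, Finset.card_range]
    calc b n ≤ ((Set.Iio n).ncard : ℝ) := Nat.cast_le.mpr h1
      _ = n := by rw [hIio]
  -- lower density bound
  have hbdd : IsBoundedUnder (· ≥ ·) atTop (fun n : ℕ => b n / n) :=
    isBoundedUnder_of ⟨0, fun n => by positivity⟩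
  set α : ℝ := atTop.liminf (fun n : ℕ => b n / n) / 2 with hαdef
  have hα : 0 < α := half_pos hmod₁'
  have Eα : ∀ᶠ n : ℕ in atTop, α < b n / n := by
    apply eventually_lt_of_lt_liminf _ hbdd
    rw [hαdef]
    linarith
  have hxT : Tendsto x atTop atTop := card_tendsto_atTop hX
  have hratio : ∀ n : ℕ, n ≠ 0 →
      (a n / n) / ((b n / n) * (x n / n)) = a n * n / (b n * x n) := by
    intro n hn
    exact ratio_rw _ _ _ _ (by exact_mod_cast hn)
  constructor
  · -- S ∩ X infinite
    by_contra h1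
    rw [Set.not_infinite] at h1
    set K : ℝ := ((S ∩ X).ncard : ℝ) with hKdef
    have hK : 0 ≤ K := by positivity
    have ha_le : ∀ n, a n ≤ K :=
      fun n => Nat.cast_le.mpr (Set.ncard_le_ncard Set.inter_subset_left h1)
    have E1 : ∀ᶠ n : ℕ in atTop,
        (1/2 : ℝ) < (a n / n) / ((b n / n) * (x n / n)) :=
      (tendsto_order.mp h').1 (1/2) (by norm_num)
    have E3 : ∀ᶠ n : ℕ in atTop, (2*K + α)/α < x n := hxT.eventually_gt_atTop _
    have E4 : ∀ᶠ n : ℕ in atTop, 1 ≤ n := eventually_ge_atTop 1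
    obtain ⟨n, h1', h2', h3', h4'⟩ := (E1.and (Eα.and (E3.and E4))).exists
    have hn0 : (0:ℝ) < n := by exact_mod_cast h4'
    have hbpos : α * n < b n := by
      rw [lt_div_iff₀ hn0] at h2'
      linarith
    have hxpos : 0 < x n := by
      have : (0:ℝ) ≤ (2*K + α)/α := by positivity
      linarith
    have hαx : 2*K + α < x n * α := (div_lt_iff₀ hα).mp h3'
    have hub : a n * n / (b n * x n) ≤ K * n / ((α * n) * x n) :=
      div_le_div₀ (by positivity)
        (mul_le_mul_of_nonneg_right (ha_le n) (le_of_lt hn0))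
        (by positivity)
        (mul_le_mul_of_nonneg_right (le_of_lt hbpos) (le_of_lt hxpos))
    have heq : K * n / ((α * n) * x n) = K / (α * x n) := by
      field_simp
    rw [hratio n (by positivity)] at h1'
    have hfin' : (1/2 : ℝ) < K / (α * x n) := by
      calc (1/2 : ℝ) < a n * n / (b n * x n) := h1'
        _ ≤ K * n / ((α * n) * x n) := hub
        _ = K / (α * x n) := heq
    have : (1/2 : ℝ) * (α * x n) < K := (lt_div_iff₀ (by positivity)).mp hfin'
    nlinarith
  · -- X \ S infinite
    by_contra h2
    rw [Set.not_infinite] at h2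
    set K : ℝ := ((X \ S).ncard : ℝ) with hKdef
    have hK : 0 ≤ K := by positivity
    have ha_ge : ∀ n : ℕ, x n ≤ a n + K := by
      intro n
      have hsub : X ∩ Set.Iio n ⊆ ((S ∩ X) ∩ Set.Iio n) ∪ (X \ S) := by
        intro k hk
        by_cases hkS : k ∈ S
        · exact Or.inl ⟨⟨hkS, hk.1⟩, hk.2⟩
        · exact Or.inr ⟨hk.1, hkS⟩
      have h1le := Set.ncard_le_ncard hsub ((hfin _ n).union h2)
      have h2le := Set.ncard_union_le ((S ∩ X) ∩ Set.Iio n) (X \ S)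
      have hnat : (X ∩ Set.Iio n).ncard ≤ ((S ∩ X) ∩ Set.Iio n).ncard + (X \ S).ncard :=
        le_trans h1le h2le
      have hcast : ((X ∩ Set.Iio n).ncard : ℝ) ≤
          (((S ∩ X) ∩ Set.Iio n).ncard : ℝ) + ((X \ S).ncard : ℝ) := by
        exact_mod_cast hnat
      exact hcast
    set Ls : ℝ := atTop.limsup (fun n : ℕ => b n / n) with hLs
    set β : ℝ := max ((Ls + 1)/2) (1/2) with hβdef
    have hβpos : 0 < β := lt_of_lt_of_le (by norm_num) (le_max_right _ _)
    have hβlt1 : β < 1 := max_lt (by linarith) (by norm_num)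
    have hLsβ : Ls < β := lt_of_lt_of_le (by linarith) (le_max_left _ _)
    have Eβ : ∀ᶠ n : ℕ in atTop, b n / n < β :=
      eventually_lt_of_limsup_lt hLsβ
        (isBoundedUnder_of ⟨1, fun n => div_le_one_of_le₀ (hb_le n) (by positivity)⟩)
    set γ : ℝ := (1 + β)/(2*β) with hγdef
    have hγ1 : 1 < γ := by
      rw [hγdef, lt_div_iff₀ (by positivity)]
      linarith
    have E1 : ∀ᶠ n : ℕ in atTop,
        (a n / n) / ((b n / n) * (x n / n)) < γ :=
      (tendsto_order.mp h').2 γ hγ1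
    have E3 : ∀ᶠ n : ℕ in atTop, 2*K/(1-β) + K + 1 < x n := hxT.eventually_gt_atTop _
    have E4 : ∀ᶠ n : ℕ in atTop, 1 ≤ n := eventually_ge_atTop 1
    obtain ⟨n, h1', h2', h3', h4', h5'⟩ :=
      (E1.and (Eα.and (Eβ.and (E3.and E4)))).exists
    have hn0 : (0:ℝ) < n := by exact_mod_cast h5'
    have hbpos : α * n < b n := by
      rw [lt_div_iff₀ hn0] at h2'
      linarith
    have hblt : b n < β * n := by
      rw [div_lt_iff₀ hn0] at h3'
      linarith
    have h1β : (0:ℝ) < 1 - β := by linarith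
    have hxpos : 0 < x n := by
      have : (0:ℝ) ≤ 2*K/(1-β) + K := by positivity
      linarith
    have hbp : 0 < b n := lt_trans (by positivity) hbpos
    have hlb : (x n - K) * n / ((β * n) * x n) ≤ a n * n / (b n * x n) :=
      div_le_div₀ (by positivity)
        (mul_le_mul_of_nonneg_right (by linarith [ha_ge n]) (le_of_lt hn0))
        (by positivity)
        (mul_le_mul_of_nonneg_right (le_of_lt hblt) (le_of_lt hxpos))
    have heq : (x n - K) * n / ((β * n) * x n) = (x n - K) / (β * x n) := by
      field_simp
    have hγle : γ ≤ (x n - K) / (β * x n) := by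
      rw [le_div_iff₀ (by positivity), hγdef]
      have h2K : 2*K < (x n - K - 1) * (1 - β) := by
        have := (div_lt_iff₀ h1β).mp (show 2*K/(1-β) < x n - K - 1 by linarith)
        linarith
      have hexp : (1 + β)/(2*β) * (β * x n) = (1 + β) * x n / 2 := by
        field_simp
      rw [hexp]
      nlinarith
    rw [hratio n (by positivity)] at h1'
    rw [heq] at hlb
    linarith
end
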